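/- If the prior covariance factors as Σ_prior = F Σ_x F* and K = Σ_prior C*(C Σ_prior C* + Σ_m)⁻¹, then the posterior covariance (I - K C)Σ_prior also factors through F, i.e., there exists a Hermitian PSD matrix Σ_x' with (I - K C)Σ_prior = F Σ_x' F*; in particular, the column space of the posterior covariance is contained in the column space of F. -/

import Mathlib

open Matrix
open scoped ComplexOrder

/-- If `Σ_prior = F Σ_x F*` then the posterior covariance
`(I - K C) Σ_prior` also factors through `F` with a Hermitian PSD middle factor;
in particular its column space is contained in the column space of `F`. -/
theorem posterior_covariance_factors_through_F
    (N M r : ℕ) (F : Matrix (Fin N) (Fin r) ℂ) (hF : Fᴴ * F = 1)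
    (Sx : Matrix (Fin r) (Fin r) ℂ) (hSx : Sx.PosSemidef)
    (Sprior : Matrix (Fin N) (Fin N) ℂ) (hSprior : Sprior = F * Sx * Fᴴ)
    (C : Matrix (Fin M) (Fin N) ℂ)
    (Sm : Matrix (Fin M) (Fin M) ℂ) (hSm : Sm.PosDef)
    (hinv : IsUnit (C * Sprior * Cᴴ + Sm).det)
    (K : Matrix (Fin N) (Fin M) ℂ)
    (hK : K = Sprior * Cᴴ * (C * Sprior * Cᴴ + Sm)⁻¹) :
    (∃ Sx' : Matrix (Fin r) (Fin r) ℂ, Sx'.PosSemidef ∧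
        (1 - K * C) * Sprior = F * Sx' * Fᴴ) ∧
      LinearMap.range ((1 - K * C) * Sprior).mulVecLin ≤
        LinearMap.range F.mulVecLin := by
  set A := C * Sprior * Cᴴ + Sm with hA
  have hCSC : (C * Sprior * Cᴴ).PosSemidef := by
    rw [hSprior]
    have h2 := hSx.mul_mul_conjTranspose_same (C * F)
    rw [conjTranspose_mul] at h2
    simp only [Matrix.mul_assoc] at h2 ⊢
    exact h2
  have hApd : A.PosDef := Matrix.PosDef.posSemidef_add hCSC hSm
  haveI : Invertible A := hApd.isUnit.invertible
  -- square root of Sx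
  open scoped MatrixOrder in set L := CFC.sqrt Sx with hL
  have hLps : L.PosSemidef := by
    open scoped MatrixOrder in exact Matrix.nonneg_iff_posSemidef.mp (CFC.sqrt_nonneg Sx)
  have hLH : Lᴴ = L := hLps.isHermitian
  have hLL : L * L = Sx := by
    open scoped MatrixOrder in exact CFC.sqrt_mul_sqrt_self Sx (Matrix.nonneg_iff_posSemidef.mpr hSx)
  set Mm := C * F * L with hMm
  -- A = Mm * Mmᴴ + Sm
  have hAeq : A = Mm * Mmᴴ + Sm := by
    rw [hA, hSprior, hMm]
    congr 1
    simp only [conjTranspose_mul, hLH]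
    rw [← hLL]
    simp only [Matrix.mul_assoc]
  -- Schur: (1 - Mmᴴ A⁻¹ Mm) PSD
  have hblock : (fromBlocks A Mm Mmᴴ (1 : Matrix (Fin r) (Fin r) ℂ)).PosSemidef := by
    rw [hAeq, show fromBlocks (Mm * Mmᴴ + Sm) Mm Mmᴴ (1 : Matrix (Fin r) (Fin r) ℂ)
        = fromBlocks (Mm * Mmᴴ) Mm Mmᴴ 1 + fromBlocks Sm 0 0 0 by
      rw [fromBlocks_add]; simp]
    apply Matrix.PosSemidef.add
    · have : fromRows Mm (1 : Matrix (Fin r) (Fin r) ℂ) *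
          (fromRows Mm (1 : Matrix (Fin r) (Fin r) ℂ))ᴴ = fromBlocks (Mm * Mmᴴ) Mm Mmᴴ 1 := by
        rw [conjTranspose_fromRows_eq_fromCols_conjTranspose, fromRows_mul_fromCols]
        simp
      rw [← this]
      exact posSemidef_self_mul_conjTranspose _
    · have : fromRows (1 : Matrix (Fin M) (Fin M) ℂ) (0 : Matrix (Fin r) (Fin M) ℂ) * Sm *
          (fromRows (1 : Matrix (Fin M) (Fin M) ℂ) (0 : Matrix (Fin r) (Fin M) ℂ))ᴴ
          = fromBlocks Sm 0 0 0 := by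
        rw [conjTranspose_fromRows_eq_fromCols_conjTranspose, fromRows_mul,
          fromRows_mul_fromCols]
        simp
      rw [← this]
      exact hSm.posSemidef.mul_mul_conjTranspose_same _
  have hschur : ((1 : Matrix (Fin r) (Fin r) ℂ) - Mmᴴ * A⁻¹ * Mm).PosSemidef :=
    (Matrix.PosDef.fromBlocks₁₁ Mm 1 hApd).mp hblock
  -- middle factor
  set Sx' := Sx - Sx * Fᴴ * Cᴴ * A⁻¹ * C * F * Sx with hSx'
  have hSx'eq : Sx' = L * ((1 : Matrix (Fin r) (Fin r) ℂ) - Mmᴴ * A⁻¹ * Mm) * Lᴴ := by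
    rw [hSx', hLH, hMm]
    simp only [conjTranspose_mul, hLH]
    rw [← hLL]
    simp only [Matrix.mul_sub, Matrix.sub_mul, Matrix.mul_one, Matrix.one_mul, Matrix.mul_assoc]
  have hSx'ps : Sx'.PosSemidef := by
    rw [hSx'eq]
    exact hschur.mul_mul_conjTranspose_same L
  have hfactor : (1 - K * C) * Sprior = F * Sx' * Fᴴ := by
    rw [hK, hSprior, hSx']
    simp only [Matrix.sub_mul, Matrix.mul_sub, Matrix.one_mul, Matrix.mul_assoc]
  refine ⟨⟨Sx', hSx'ps, hfactor⟩, ?_⟩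
  rw [hfactor, Matrix.mul_assoc, Matrix.mulVecLin_mul]
  exact LinearMap.range_comp_le_range _ _
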